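/- For s ≥ 2, the Legendre quantity satisfies K_L(s) ≥ (4/3)·max_{ν ∈ H_s} ∏_k(2ν_k+1), where K_L(s) is the supremum of Σ_{ν∈Λ} ∏_k(2ν_k+1) over lower sets Λ ⊂ H_s of cardinality s. -/

import Mathlib

open Finset

/-- `K_L(s)`: the supremum of `∑_{ν ∈ Λ} ∏_k (2 ν_k + 1)` over lower sets
`Λ ⊆ H_s` of cardinality `s`. -/
noncomputable def KL (d s : ℕ) : ℕ :=
  sSup {t : ℕ | ∃ Λ : Finset (Fin d → ℕ),
    (∀ ν ∈ Λ, ∀ μ : Fin d → ℕ, (∀ k, μ k ≤ ν k) → μ ∈ Λ) ∧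
    (∀ ν ∈ Λ, ∏ k, (ν k + 1) ≤ s) ∧ Λ.card = s ∧
    t = ∑ ν ∈ Λ, ∏ k, (2 * ν k + 1)}

lemma sum_odds (n : ℕ) : ∑ j ∈ Finset.range (n+1), (2*j+1) = (n+1)^2 := by
  induction n with
  | zero => simp
  | succ n ih => rw [Finset.sum_range_succ, ih]; ring

lemma nat_ineq {d : ℕ} (ν : Fin d → ℕ) (k0 : Fin d) (h : 1 ≤ ν k0) :
    4 * ∏ k, (2 * ν k + 1) ≤ 3 * (∏ k, (ν k + 1))^2 := by
  rw [← Finset.prod_pow]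
  rw [← Finset.mul_prod_erase Finset.univ _ (Finset.mem_univ k0),
      ← Finset.mul_prod_erase Finset.univ (fun k => (ν k + 1)^2) (Finset.mem_univ k0)]
  have h1 : 4 * (2 * ν k0 + 1) ≤ 3 * (ν k0 + 1)^2 := by nlinarith
  have h2 : ∏ k ∈ Finset.univ.erase k0, (2 * ν k + 1)
      ≤ ∏ k ∈ Finset.univ.erase k0, (ν k + 1)^2 :=
    Finset.prod_le_prod' fun i _ => by nlinarith
  calc 4 * ((2 * ν k0 + 1) * ∏ k ∈ univ.erase k0, (2 * ν k + 1))
      = (4 * (2 * ν k0 + 1)) * ∏ k ∈ univ.erase k0, (2 * ν k + 1) := by ring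
    _ ≤ (3 * (ν k0 + 1)^2) * ∏ k ∈ univ.erase k0, (ν k + 1)^2 := Nat.mul_le_mul h1 h2
    _ = 3 * ((ν k0 + 1)^2 * ∏ k ∈ univ.erase k0, (ν k + 1)^2) := by ring

/-- The index set `H_s` as a finset. -/
def Hfin (d s : ℕ) : Finset (Fin d → ℕ) :=
  (Fintype.piFinset fun _ : Fin d => Finset.range s).filter fun ν => ∏ k, (ν k + 1) ≤ s

lemma mem_Hfin {d s : ℕ} (ν : Fin d → ℕ) :
    ν ∈ Hfin d s ↔ ∏ k, (ν k + 1) ≤ s := by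
  simp only [Hfin, Finset.mem_filter, Fintype.mem_piFinset, Finset.mem_range]
  constructor
  · exact fun h => h.2
  · intro h
    refine ⟨fun k => ?_, h⟩
    have : ν k + 1 ≤ ∏ j, (ν j + 1) :=
      Finset.single_le_prod' (fun j _ => Nat.le_add_left 1 (ν j)) (Finset.mem_univ k)
    omega

lemma card_Hfin {d : ℕ} (s : ℕ) (hd : 1 ≤ d) : s ≤ (Hfin d s).card := by
  have key : (Finset.range s).card ≤ (Hfin d s).card := by
    apply Finset.card_le_card_of_injOn (fun j k => if k = (⟨0, hd⟩ : Fin d) then j else 0)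
    · intro j hj
      simp only [Finset.mem_coe]; rw [mem_Hfin]
      have hp : ∏ k, ((if k = (⟨0, hd⟩ : Fin d) then j else 0) + 1) = j + 1 := by
        rw [Finset.prod_eq_single (⟨0, hd⟩ : Fin d)]
        · simp
        · intro b _ hb; simp [hb]
        · simp
      rw [hp]
      exact Finset.mem_range.mp hj
    · intro a _ b _ hab
      have := congrFun hab (⟨0, hd⟩ : Fin d)
      simpa using this
  simpa using key

lemma extend {d s : ℕ} : ∀ (n : ℕ) (Λ : Finset (Fin d → ℕ)),
    Λ ⊆ Hfin d s →
    (∀ ν ∈ Λ, ∀ μ : Fin d → ℕ, (∀ k, μ k ≤ ν k) → μ ∈ Λ) →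
    Λ.card ≤ n → n ≤ (Hfin d s).card →
    ∃ Λ' : Finset (Fin d → ℕ), Λ ⊆ Λ' ∧ Λ' ⊆ Hfin d s ∧
      (∀ ν ∈ Λ', ∀ μ : Fin d → ℕ, (∀ k, μ k ≤ ν k) → μ ∈ Λ') ∧ Λ'.card = n := by
  intro n
  induction n with
  | zero => exact fun Λ hsub hlow hc _ =>
      ⟨Λ, Finset.Subset.refl _, hsub, hlow, Nat.le_zero.mp hc⟩
  | succ n ih =>
    intro Λ hsub hlow hc hn
    by_cases hcard : Λ.card = n + 1
    · exact ⟨Λ, Finset.Subset.refl _, hsub, hlow, hcard⟩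
    · have hc' : Λ.card ≤ n := by omega
      obtain ⟨Λ', h1, h2, h3, h4⟩ := ih Λ hsub hlow hc' (by omega)
      have hne : (Hfin d s \ Λ').Nonempty := by
        rw [Finset.sdiff_nonempty]
        intro hHsub
        have := Finset.card_le_card hHsub
        omega
      obtain ⟨μ, hμmem, hμmin⟩ := Finset.exists_min_image _ (fun μ => ∑ k, μ k) hne
      rw [Finset.mem_sdiff] at hμmem
      refine ⟨insert μ Λ', h1.trans (Finset.subset_insert _ _),
        Finset.insert_subset hμmem.1 h2, ?_, ?_⟩
      · intro ν hνmem μ' hμ'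
        rw [Finset.mem_insert] at hνmem
        rcases hνmem with rfl | hνmem
        · by_cases heq : μ' = ν
          · subst heq; exact Finset.mem_insert_self _ _
          · refine Finset.mem_insert_of_mem ?_
            by_contra hnot
            have hμ'H : μ' ∈ Hfin d s := by
              rw [mem_Hfin]
              calc ∏ k, (μ' k + 1) ≤ ∏ k, (ν k + 1) :=
                    Finset.prod_le_prod' fun k _ => by have := hμ' k; omega
                _ ≤ s := (mem_Hfin ν).mp hμmem.1
            have hlt : ∑ k, μ' k < ∑ k, ν k := by
              obtain ⟨k, hk⟩ : ∃ k, μ' k ≠ ν k := by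
                by_contra hh
                push_neg at hh
                exact heq (funext hh)
              exact Finset.sum_lt_sum (fun i _ => hμ' i)
                ⟨k, Finset.mem_univ k, lt_of_le_of_ne (hμ' k) hk⟩
            have := hμmin μ' (Finset.mem_sdiff.mpr ⟨hμ'H, hnot⟩)
            omega
        · exact Finset.mem_insert_of_mem (h3 ν hνmem μ' hμ')
      · rw [Finset.card_insert_of_notMem hμmem.2, h4]

theorem KL_ge_max_weight (d s : ℕ) (hd : 1 ≤ d) (hs : 2 ≤ s)
    (ν : Fin d → ℕ) (hν : ∏ k, (ν k + 1) ≤ s) :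
    (4 / 3 : ℝ) * ∏ k, (2 * (ν k : ℝ) + 1) ≤ (KL d s : ℝ) := by
  classical
  set R : Finset (Fin d → ℕ) := Fintype.piFinset fun k => Finset.range (ν k + 1) with hR
  have hRmem : ∀ μ : Fin d → ℕ, μ ∈ R ↔ ∀ k, μ k ≤ ν k := by
    intro μ; simp [hR, Nat.lt_succ_iff]
  have hRsub : R ⊆ Hfin d s := fun μ hμ => by
    rw [mem_Hfin]
    calc ∏ k, (μ k + 1) ≤ ∏ k, (ν k + 1) := Finset.prod_le_prod' fun k _ => by
          have := (hRmem μ).mp hμ k; omega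
      _ ≤ s := hν
  have hRlow : ∀ ν' ∈ R, ∀ μ : Fin d → ℕ, (∀ k, μ k ≤ ν' k) → μ ∈ R := by
    intro ν' hν' μ hμ
    rw [hRmem] at hν' ⊢
    exact fun k => (hμ k).trans (hν' k)
  have hRcard_le : R.card ≤ s := by
    have : R.card = ∏ k, (ν k + 1) := by simp [hR]
    omega
  obtain ⟨Λ, hΛ1, hΛ2, hΛ3, hΛ4⟩ := extend s R hRsub hRlow hRcard_le (card_Hfin s hd)
  set t : ℕ := ∑ μ ∈ Λ, ∏ k, (2 * μ k + 1) with ht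
  have hmem : t ∈ {t : ℕ | ∃ Λ : Finset (Fin d → ℕ),
      (∀ ν ∈ Λ, ∀ μ : Fin d → ℕ, (∀ k, μ k ≤ ν k) → μ ∈ Λ) ∧
      (∀ ν ∈ Λ, ∏ k, (ν k + 1) ≤ s) ∧ Λ.card = s ∧
      t = ∑ ν ∈ Λ, ∏ k, (2 * ν k + 1)} :=
    ⟨Λ, hΛ3, fun μ hμ => (mem_Hfin μ).mp (hΛ2 hμ), hΛ4, ht⟩
  have hbdd : BddAbove {t : ℕ | ∃ Λ : Finset (Fin d → ℕ),
      (∀ ν ∈ Λ, ∀ μ : Fin d → ℕ, (∀ k, μ k ≤ ν k) → μ ∈ Λ) ∧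
      (∀ ν ∈ Λ, ∏ k, (ν k + 1) ≤ s) ∧ Λ.card = s ∧
      t = ∑ ν ∈ Λ, ∏ k, (2 * ν k + 1)} := by
    clear_value t
    clear_value R
    clear hmem ht hRmem hRsub hRlow hRcard_le hΛ1 hΛ2 hΛ3 hΛ4 hν hR R t Λ ν
    refine ⟨s * (2*s)^d, ?_⟩
    rintro x ⟨Λ', _, hH', hcard', rfl⟩
    calc ∑ μ ∈ Λ', ∏ k, (2*μ k+1) ≤ ∑ _μ ∈ Λ', (2*s)^d := by
          refine Finset.sum_le_sum fun μ hμ => ?_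
          calc ∏ k, (2*μ k+1) ≤ ∏ _k : Fin d, (2*s) := by
                refine Finset.prod_le_prod' fun k _ => ?_
                have h1 : μ k + 1 ≤ ∏ j, (μ j + 1) :=
                  Finset.single_le_prod' (fun j _ => Nat.le_add_left 1 (μ j)) (Finset.mem_univ k)
                have h2 := hH' μ hμ
                have h3 : μ k + 1 ≤ s := h1.trans h2
                show 2 * μ k + 1 ≤ 2 * s
                omega
            _ = (2*s)^d := by simp [Finset.prod_const, Finset.card_univ]
      _ = Λ'.card * (2*s)^d := by rw [Finset.sum_const, smul_eq_mul]
      _ = s * (2*s)^d := by rw [hcard']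
  have hKL : t ≤ KL d s := le_csSup hbdd hmem
  have hKLr : (t:ℝ) ≤ (KL d s : ℝ) := by exact_mod_cast hKL
  have hsum_R : ∑ μ ∈ R, ∏ k, (2 * μ k + 1) = ∏ k, (ν k + 1)^2 := by
    have key := Finset.prod_univ_sum (fun k : Fin d => Finset.range (ν k + 1))
      (fun _ j => 2 * j + 1)
    rw [hR, ← key]
    exact Finset.prod_congr rfl fun k _ => sum_odds (ν k)
  have htR : ∑ μ ∈ R, ∏ k, (2 * μ k + 1) ≤ t :=
    Finset.sum_le_sum_of_subset hΛ1
  by_cases hzero : ∀ k, ν k = 0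
  · have hone : ∏ k, (2 * (ν k : ℝ) + 1) = 1 := by
      apply Finset.prod_eq_one; intro k _; rw [hzero k]; norm_num
    rw [hone, mul_one]
    have ht2 : s ≤ t := by
      calc s = Λ.card := hΛ4.symm
        _ = ∑ _μ ∈ Λ, 1 := by rw [Finset.sum_const, smul_eq_mul, mul_one]
        _ ≤ t := Finset.sum_le_sum fun μ _ =>
            Finset.one_le_prod' fun k _ => Nat.le_add_left 1 (2 * μ k)
    have h2t : (2:ℝ) ≤ (t:ℝ) := by exact_mod_cast le_trans hs ht2
    linarith
  · push_neg at hzero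
    obtain ⟨k0, hk0⟩ := hzero
    have hnat : 4 * ∏ k, (2 * ν k + 1) ≤ 3 * t := by
      calc 4 * ∏ k, (2 * ν k + 1) ≤ 3 * (∏ k, (ν k + 1))^2 :=
            nat_ineq ν k0 (Nat.one_le_iff_ne_zero.mpr hk0)
        _ = 3 * ∑ μ ∈ R, ∏ k, (2*μ k+1) := by rw [hsum_R, Finset.prod_pow]
        _ ≤ 3 * t := Nat.mul_le_mul_left _ htR
    have hreal : 4 * ∏ k, (2 * (ν k:ℝ) + 1) ≤ 3 * (t:ℝ) := by exact_mod_cast hnat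
    rw [div_mul_eq_mul_div, div_le_iff₀ (by norm_num : (0:ℝ) < 3)]
    nlinarith
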